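/- (Pathwise reward bound at the core of Theorem 4.) Let N ≥ 1, T ≥ 1, γ ∈ (0,1), and C, D > 0. Define weight vectors v_t : Fin N → ℝ recursively by v_1(n) = 1 for all n and v_{t+1}(n) = v_t(n)·exp(γ·r̂_t(n)/(N·C)), where at each round t: w_t(n) := (1−γ)·v_t(n)/(Σ_m v_t(m)) + γ/N; S_t ⊆ Fin N is an arbitrary excluded set with selected arm a_t ∉ S_t; q_t(n) := w_t(n)/(Σ_{m ∉ S_t} w_t(m)) for n ∉ S_t; the realized reward r_t satisfies 0 ≤ r_t ≤ D and C ≥ γ·r_t/(N·q_t(a_t)); and the reward estimates are r̂_t(a_t) := r_t/q_t(a_t) and r̂_t(n) := 0 for n ≠ a_t. Then for every arm j ∈ Fin N: Σ_{t=1}^T r_t ≥ (1−γ)·Σ_{t=1}^T r̂_t(j) − (N·C·ln N)/γ − (e−2)·(γ·D/(N·C))·Σ_{t=1}^T Σ_{n} r̂_t(n). -/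

import Mathlib

lemma exp_series' (y : ℝ) :
    Real.exp y = 1 + y + ∑' n : ℕ, y ^ (n+2) / (n+2).factorial := by
  have hS : Summable (fun n : ℕ => y ^ n / n.factorial) := Real.summable_pow_div_factorial y
  have h1 : Real.exp y = ∑' n : ℕ, y ^ n / n.factorial := by
    rw [Real.exp_eq_exp_ℝ, NormedSpace.exp_eq_tsum_div]
  rw [h1, hS.tsum_eq_zero_add, ((summable_nat_add_iff 1).2 hS).tsum_eq_zero_add]
  simp [Nat.factorial]
  ring

set_option maxHeartbeats 1000000 in
lemma exp_quad' {x : ℝ} (h0 : 0 ≤ x) (h1 : x ≤ 1) :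
    Real.exp x ≤ 1 + x + (Real.exp 1 - 2) * x ^ 2 := by
  have he : Real.exp 1 - 2 = ∑' n : ℕ, (1:ℝ) ^ (n+2) / (n+2).factorial := by
    rw [exp_series' 1]; ring
  rw [exp_series' x, he]
  have hSx : Summable (fun n : ℕ => x ^ (n+2) / ((n+2).factorial : ℝ)) :=
    (summable_nat_add_iff 2).2 (Real.summable_pow_div_factorial x)
  have hS1 : Summable (fun n : ℕ => (1:ℝ) ^ (n+2) / ((n+2).factorial : ℝ)) :=
    (summable_nat_add_iff 2).2 (Real.summable_pow_div_factorial 1)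
  have key : ∑' n : ℕ, x ^ (n+2) / ((n+2).factorial : ℝ)
      ≤ x ^ 2 * ∑' n : ℕ, (1:ℝ) ^ (n+2) / ((n+2).factorial : ℝ) := by
    rw [← tsum_mul_left]
    refine Summable.tsum_le_tsum (fun n => ?_) hSx (hS1.mul_left _)
    have hfac : (0:ℝ) < ((n+2).factorial : ℝ) := by positivity
    have hx : x ^ (n+2) ≤ x ^ 2 := by
      calc x ^ (n+2) = x ^ n * x ^ 2 := by ring
      _ ≤ 1 * x ^ 2 := by
          have := pow_le_one₀ h0 h1 (n := n)
          nlinarith [pow_nonneg h0 2]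
      _ = x ^ 2 := one_mul _
    rw [one_pow, mul_one_div]
    gcongr
  linarith [key]

lemma telescope_Icc (f : ℕ → ℝ) (M : ℕ) :
    ∑ t ∈ Finset.Icc 1 M, (f (t+1) - f t) = f (M+1) - f 1 := by
  induction M with
  | zero => simp
  | succ m ih => rw [Finset.sum_Icc_succ_top (by omega), ih]; ring

set_option maxHeartbeats 2000000 in
/-- **Pathwise reward bound at the core of Theorem 4.** Under the exponential-weight
(Exp3-style) update of the RSB algorithm, for every arm `j`,
`Σ_{t=1}^T r_t ≥ (1−γ)·Σ_{t=1}^T r̂_t(j) − (N·C·ln N)/γ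
  − (e−2)·(γ·D/(N·C))·Σ_{t=1}^T Σ_n r̂_t(n)`. -/
theorem rsb_pathwise_reward_bound
    (N T : ℕ) (hN : 1 ≤ N) (hT : 1 ≤ T)
    (γ C D : ℝ) (hγ0 : 0 < γ) (hγ1 : γ < 1) (hC : 0 < C) (hD : 0 < D)
    (v w q rhat : ℕ → Fin N → ℝ)
    (S : ℕ → Finset (Fin N)) (a : ℕ → Fin N) (r : ℕ → ℝ)
    (hv1 : ∀ n, v 1 n = 1)
    (hw : ∀ t, 1 ≤ t → t ≤ T → ∀ n,
      w t n = (1 - γ) * v t n / (∑ m, v t m) + γ / N)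
    (ha : ∀ t, 1 ≤ t → t ≤ T → a t ∉ S t)
    (hq : ∀ t, 1 ≤ t → t ≤ T → ∀ n ∉ S t,
      q t n = w t n / (∑ m ∈ Finset.univ \ S t, w t m))
    (hr0 : ∀ t, 1 ≤ t → t ≤ T → 0 ≤ r t)
    (hrD : ∀ t, 1 ≤ t → t ≤ T → r t ≤ D)
    (hCbig : ∀ t, 1 ≤ t → t ≤ T → γ * r t / (N * q t (a t)) ≤ C)
    (hrhat_a : ∀ t, 1 ≤ t → t ≤ T → rhat t (a t) = r t / q t (a t))
    (hrhat_ne : ∀ t, 1 ≤ t → t ≤ T → ∀ n, n ≠ a t → rhat t n = 0)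
    (hvrec : ∀ t, 1 ≤ t → t ≤ T → ∀ n,
      v (t + 1) n = v t n * Real.exp (γ * rhat t n / (N * C))) :
    ∀ j : Fin N,
      ∑ t ∈ Finset.Icc 1 T, r t ≥
        (1 - γ) * ∑ t ∈ Finset.Icc 1 T, rhat t j -
          N * C * Real.log N / γ -
          (Real.exp 1 - 2) * (γ * D / (N * C)) *
            ∑ t ∈ Finset.Icc 1 T, ∑ n, rhat t n := by
  intro j
  have hNe : Nonempty (Fin N) := ⟨⟨0, hN⟩⟩
  have hNr : (0:ℝ) < N := by exact_mod_cast Nat.lt_of_lt_of_le Nat.zero_lt_one hN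
  have hγ1' : 0 < 1 - γ := by linarith
  have hc : (0:ℝ) ≤ Real.exp 1 - 2 := by nlinarith [Real.exp_one_gt_d9]
  set c : ℝ := Real.exp 1 - 2 with hc_def
  set η : ℝ := γ / (N * C) with hη_def
  have hηpos : 0 < η := div_pos hγ0 (mul_pos hNr hC)
  -- positivity of v
  have hvpos : ∀ t, 1 ≤ t → t ≤ T + 1 → ∀ n, 0 < v t n := by
    intro t ht1
    induction t, ht1 using Nat.le_induction with
    | base => intro _ n; rw [hv1]; norm_num
    | succ t ht ih =>
      intro ht2 n
      rw [hvrec t ht (by omega) n]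
      exact mul_pos (ih (by omega) n) (Real.exp_pos _)
  have hVpos : ∀ t, 1 ≤ t → t ≤ T + 1 → 0 < ∑ m, v t m := fun t h1 h2 =>
    Finset.sum_pos (fun n _ => hvpos t h1 h2 n) Finset.univ_nonempty
  -- per-round facts
  have hround : ∀ t, 1 ≤ t → t ≤ T →
      (∀ n, 0 ≤ rhat t n) ∧
      Real.log (∑ n, v (t+1) n) - Real.log (∑ n, v t n) ≤
        η / (1 - γ) * r t + c * η^2 * D / (1 - γ) * ∑ n, rhat t n := by
    intro t ht1 htT
    have hVt := hVpos t ht1 (by omega)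
    have hVt1 := hVpos (t+1) (by omega) (by omega)
    have hwpos : ∀ n, 0 < w t n := by
      intro n
      rw [hw t ht1 htT n]
      exact add_pos (div_pos (mul_pos hγ1' (hvpos t ht1 (by omega) n)) hVt)
        (div_pos hγ0 hNr)
    have hwsum : ∑ n, w t n = 1 := by
      calc ∑ n, w t n = ∑ n : Fin N, ((1 - γ) * v t n / (∑ m, v t m) + γ / N) :=
            Finset.sum_congr rfl fun n _ => hw t ht1 htT n
      _ = (1 - γ) * (∑ n, v t n) / (∑ m, v t m) + (N : ℝ) * (γ / N) := by
            rw [Finset.sum_add_distrib, Finset.sum_const, Finset.card_univ,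
              Fintype.card_fin, nsmul_eq_mul, ← Finset.sum_div, ← Finset.mul_sum]
      _ = 1 := by field_simp; ring
    have haS : a t ∈ Finset.univ \ S t :=
      Finset.mem_sdiff.2 ⟨Finset.mem_univ _, ha t ht1 htT⟩
    set den : ℝ := ∑ m ∈ Finset.univ \ S t, w t m with hden_def
    have hdenpos : 0 < den :=
      Finset.sum_pos' (fun n _ => (hwpos n).le) ⟨a t, haS, hwpos _⟩
    have hden1 : den ≤ 1 := by
      rw [hden_def, ← hwsum]
      exact Finset.sum_le_sum_of_subset_of_nonneg Finset.sdiff_subset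
        (fun n _ _ => (hwpos n).le)
    have hqa : q t (a t) = w t (a t) / den := hq t ht1 htT (a t) (ha t ht1 htT)
    have hqa_pos : 0 < q t (a t) := hqa ▸ div_pos (hwpos _) hdenpos
    have hrh0 : ∀ n, 0 ≤ rhat t n := by
      intro n
      by_cases h : n = a t
      · subst h
        rw [hrhat_a t ht1 htT]
        exact div_nonneg (hr0 t ht1 htT) hqa_pos.le
      · rw [hrhat_ne t ht1 htT n h]
    refine ⟨hrh0, ?_⟩
    have hηrh : ∀ n, η * rhat t n ≤ 1 := by
      intro n
      by_cases h : n = a t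
      · subst h
        rw [hrhat_a t ht1 htT]
        have h2 := hCbig t ht1 htT
        rw [hη_def, div_mul_div_comm, div_le_one (by positivity)]
        have h2' : γ * r t ≤ C * (↑N * q t (a t)) :=
          (div_le_iff₀ (by positivity)).1 h2
        calc γ * r t ≤ C * (↑N * q t (a t)) := h2'
        _ = ↑N * C * q t (a t) := by ring
      · rw [hrhat_ne t ht1 htT n h, mul_zero]; norm_num
    -- step 1: exp bound termwise
    have h1 : ∑ n, v (t+1) n ≤ ∑ n, v t n * (1 + η * rhat t n + c * (η * rhat t n)^2) := by
      refine Finset.sum_le_sum fun n _ => ?_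
      rw [hvrec t ht1 htT n, show γ * rhat t n / (N * C) = η * rhat t n by
        rw [hη_def]; ring]
      exact mul_le_mul_of_nonneg_left
        (exp_quad' (mul_nonneg hηpos.le (hrh0 n)) (hηrh n))
        (hvpos t ht1 (by omega) n).le
    -- step 2: v ≤ V/(1-γ) * w
    have hvw : ∀ n, v t n ≤ (∑ m, v t m) / (1 - γ) * w t n := by
      intro n
      rw [hw t ht1 htT n]
      have e1 : (∑ m, v t m) / (1 - γ) * ((1 - γ) * v t n / (∑ m, v t m) + γ / N)
          = v t n + (∑ m, v t m) / (1 - γ) * (γ / N) := by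
        field_simp
      rw [e1]
      have h2 : 0 ≤ (∑ m, v t m) / (1 - γ) * (γ / N) :=
        mul_nonneg (div_nonneg hVt.le hγ1'.le) (div_nonneg hγ0.le hNr.le)
      linarith
    have h2 : ∑ n, v t n * (1 + η * rhat t n + c * (η * rhat t n)^2)
        ≤ (∑ m, v t m) + (∑ m, v t m) / (1 - γ) *
            ∑ n, w t n * (η * rhat t n + c * (η * rhat t n)^2) := by
      have e2 : ∀ n : Fin N, v t n * (1 + η * rhat t n + c * (η * rhat t n)^2)
          = v t n + v t n * (η * rhat t n + c * (η * rhat t n)^2) := fun n => by ring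
      rw [Finset.sum_congr rfl fun n _ => e2 n, Finset.sum_add_distrib, Finset.mul_sum]
      refine add_le_add_right (Finset.sum_le_sum fun n _ => ?_) _
      have hA : 0 ≤ η * rhat t n + c * (η * rhat t n)^2 :=
        add_nonneg (mul_nonneg hηpos.le (hrh0 n)) (mul_nonneg hc (sq_nonneg _))
      calc v t n * (η * rhat t n + c * (η * rhat t n)^2)
          ≤ ((∑ m, v t m) / (1 - γ) * w t n) * (η * rhat t n + c * (η * rhat t n)^2) :=
            mul_le_mul_of_nonneg_right (hvw n) hA
      _ = (∑ m, v t m) / (1 - γ) * (w t n * (η * rhat t n + c * (η * rhat t n)^2)) := by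
            ring
    -- step 3: only a t contributes
    have h3 : ∑ n, w t n * (η * rhat t n + c * (η * rhat t n)^2)
        = w t (a t) * (η * rhat t (a t) + c * (η * rhat t (a t))^2) := by
      refine Finset.sum_eq_single (a t) (fun n _ hne => ?_)
        (fun h => absurd (Finset.mem_univ _) h)
      rw [hrhat_ne t ht1 htT n hne]; ring
    -- step 4: bound the a t term
    have hwr : w t (a t) * rhat t (a t) = den * r t := by
      have hwne : w t (a t) ≠ 0 := (hwpos (a t)).ne'
      calc w t (a t) * rhat t (a t)
          = w t (a t) * (r t * den / w t (a t)) := by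
            rw [hrhat_a t ht1 htT, hqa, div_div_eq_mul_div]
      _ = den * r t := by
            rw [← mul_div_assoc, mul_div_cancel_left₀ _ hwne]; ring
    have hbound : w t (a t) * (η * rhat t (a t) + c * (η * rhat t (a t))^2)
        ≤ η * r t + c * η^2 * D * ∑ n, rhat t n := by
      have hrhata := hrh0 (a t)
      have hsum_ge : rhat t (a t) ≤ ∑ n, rhat t n :=
        Finset.single_le_sum (fun n _ => hrh0 n) (Finset.mem_univ _)
      have key1 : den * r t ≤ r t := by nlinarith [hr0 t ht1 htT]
      have key2 : den * r t * rhat t (a t) ≤ D * ∑ n, rhat t n := by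
        have h' : den * r t ≤ D := le_trans key1 (hrD t ht1 htT)
        calc den * r t * rhat t (a t) ≤ D * rhat t (a t) :=
              mul_le_mul_of_nonneg_right h' hrhata
        _ ≤ D * ∑ n, rhat t n := mul_le_mul_of_nonneg_left hsum_ge hD.le
      calc w t (a t) * (η * rhat t (a t) + c * (η * rhat t (a t))^2)
          = η * (w t (a t) * rhat t (a t))
            + c * η^2 * ((w t (a t) * rhat t (a t)) * rhat t (a t)) := by ring
      _ = η * (den * r t) + c * η^2 * (den * r t * rhat t (a t)) := by rw [hwr]
      _ ≤ η * r t + c * η^2 * (D * ∑ n, rhat t n) :=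
            add_le_add (mul_le_mul_of_nonneg_left key1 hηpos.le)
              (mul_le_mul_of_nonneg_left key2 (mul_nonneg hc (sq_nonneg η)))
      _ = η * r t + c * η^2 * D * ∑ n, rhat t n := by ring
    -- combine
    have hchain : ∑ n, v (t+1) n ≤
        (1 + (η / (1 - γ) * r t + c * η^2 * D / (1 - γ) * ∑ n, rhat t n)) * ∑ m, v t m := by
      calc ∑ n, v (t+1) n
          ≤ ∑ n, v t n * (1 + η * rhat t n + c * (η * rhat t n)^2) := h1
      _ ≤ (∑ m, v t m) + (∑ m, v t m) / (1 - γ) *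
            ∑ n, w t n * (η * rhat t n + c * (η * rhat t n)^2) := h2
      _ = (∑ m, v t m) + (∑ m, v t m) / (1 - γ) *
            (w t (a t) * (η * rhat t (a t) + c * (η * rhat t (a t))^2)) := by rw [h3]
      _ ≤ (∑ m, v t m) + (∑ m, v t m) / (1 - γ) *
            (η * r t + c * η^2 * D * ∑ n, rhat t n) :=
            add_le_add_right (mul_le_mul_of_nonneg_left hbound
              (div_nonneg hVt.le hγ1'.le)) _
      _ = (1 + (η / (1 - γ) * r t + c * η^2 * D / (1 - γ) * ∑ n, rhat t n)) * ∑ m, v t m := by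
            field_simp
    have hratio : (∑ n, v (t+1) n) / (∑ m, v t m)
        ≤ 1 + (η / (1 - γ) * r t + c * η^2 * D / (1 - γ) * ∑ n, rhat t n) := by
      rw [div_le_iff₀ hVt]
      exact hchain
    calc Real.log (∑ n, v (t+1) n) - Real.log (∑ n, v t n)
        = Real.log ((∑ n, v (t+1) n) / (∑ n, v t n)) :=
          (Real.log_div hVt1.ne' hVt.ne').symm
    _ ≤ (∑ n, v (t+1) n) / (∑ n, v t n) - 1 :=
          Real.log_le_sub_one_of_pos (div_pos hVt1 hVt)
    _ ≤ η / (1 - γ) * r t + c * η^2 * D / (1 - γ) * ∑ n, rhat t n := by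
          linarith [hratio]
  -- sum the step inequality
  have htel := telescope_Icc (fun t => Real.log (∑ n, v t n)) T
  have hlogsum : Real.log (∑ n, v (T+1) n) - Real.log (∑ n, v 1 n) ≤
      η / (1 - γ) * (∑ t ∈ Finset.Icc 1 T, r t)
        + c * η^2 * D / (1 - γ) * ∑ t ∈ Finset.Icc 1 T, ∑ n, rhat t n := by
    rw [← htel, Finset.mul_sum, Finset.mul_sum, ← Finset.sum_add_distrib]
    refine Finset.sum_le_sum fun t ht => ?_
    obtain ⟨h1', h2'⟩ := Finset.mem_Icc.1 ht
    exact (hround t h1' h2').2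
  -- lower bound via arm j
  have hvj : Real.log (v (T+1) j) = η * ∑ t ∈ Finset.Icc 1 T, rhat t j := by
    have hstep' : ∀ t ∈ Finset.Icc 1 T,
        Real.log (v (t+1) j) - Real.log (v t j) = η * rhat t j := by
      intro t ht
      obtain ⟨h1', h2'⟩ := Finset.mem_Icc.1 ht
      rw [hvrec t h1' h2' j,
        Real.log_mul (hvpos t h1' (by omega) j).ne' (Real.exp_pos _).ne',
        Real.log_exp, show γ * rhat t j / (N * C) = η * rhat t j by rw [hη_def]; ring]
      ring
    have h6 := telescope_Icc (fun t => Real.log (v t j)) T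
    rw [Finset.sum_congr rfl hstep', ← Finset.mul_sum, hv1 j, Real.log_one, sub_zero] at h6
    exact h6.symm
  have hVj : Real.log (v (T+1) j) ≤ Real.log (∑ n, v (T+1) n) :=
    Real.log_le_log (hvpos (T+1) (by omega) (by omega) j)
      (Finset.single_le_sum (fun n _ => (hvpos (T+1) (by omega) (by omega) n).le)
        (Finset.mem_univ j))
  have hV1 : (∑ n, v 1 n) = (N : ℝ) := by
    simp [hv1]
  have hlogN : (0:ℝ) ≤ Real.log N := Real.log_nonneg (by exact_mod_cast hN)
  -- main inequality
  have H : η * (∑ t ∈ Finset.Icc 1 T, rhat t j) - Real.log N ≤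
      η / (1 - γ) * (∑ t ∈ Finset.Icc 1 T, r t)
        + c * η^2 * D / (1 - γ) * ∑ t ∈ Finset.Icc 1 T, ∑ n, rhat t n := by
    rw [← hvj]
    have := hlogsum
    rw [hV1] at this
    linarith [hVj]
  -- multiply through by (1-γ)/η
  set Sj := ∑ t ∈ Finset.Icc 1 T, rhat t j
  set SR := ∑ t ∈ Finset.Icc 1 T, r t
  set SS := ∑ t ∈ Finset.Icc 1 T, ∑ n, rhat t n
  have H2 := mul_le_mul_of_nonneg_left H (le_of_lt (div_pos hγ1' hηpos))
  have lhs_eq : (1 - γ) / η * (η * Sj - Real.log N)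
      = (1 - γ) * Sj - (1 - γ) * Real.log N / η := by
    field_simp
  have rhs_eq : (1 - γ) / η * (η / (1 - γ) * SR + c * η^2 * D / (1 - γ) * SS)
      = SR + c * η * D * SS := by
    field_simp
  rw [lhs_eq, rhs_eq] at H2
  have heq1 : c * η * D * SS = c * (γ * D / (N * C)) * SS := by
    rw [hη_def]; ring
  have hlog2 : (1 - γ) * Real.log N / η ≤ (N : ℝ) * C * Real.log N / γ := by
    rw [hη_def]
    have e4 : (1 - γ) * Real.log N / (γ / (N * C))
        = (1 - γ) * ((N : ℝ) * C * Real.log N / γ) := by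
      field_simp
    rw [e4]
    have h5 : 0 ≤ (N : ℝ) * C * Real.log N / γ := by positivity
    nlinarith
  rw [heq1] at H2
  linarith
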